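/- Let F = (f_i)_{i∈I} be a J-frame for a Krein space H, with M₊ = R(T₊) and M₋ = R(T₋). Let α₊ > 0 be the definiteness bound of M₊, i.e. the largest constant with α₊‖f‖² ≤ [f,f] for all f ∈ M₊, and α₋ > 0 the definiteness bound of M₋, i.e. the largest constant with [f,f] ≤ −α₋‖f‖² for all f ∈ M₋. Then for every f ∈ M₊, γ(T₊)² α₊² [f,f] ≤ Σ_{i∈I₊} |[f, f_i]|² ≤ (‖T₊‖²/α₊) [f,f], and for every f ∈ M₋, γ(T₋)² α₋² (−[f,f]) ≤ Σ_{i∈I₋} |[f, f_i]|² ≤ (‖T₋‖²/α₋) (−[f,f]). -/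

import Mathlib

/- Frames for Krein spaces ("J-frames"), following Giribet–Maestripieri–Martínez Pería–Massey.

A Krein space is modelled as a complex Hilbert space `H` together with a fundamental symmetry
`J : H →L[ℂ] H` (selfadjoint, `J ∘L J = 1`); the indefinite inner product is `[x,y] = ⟪J x, y⟫`. -/

noncomputable section

open scoped ComplexInnerProductSpace ComplexOrder
open ContinuousLinearMap

attribute [local instance] Classical.propDecidable

namespace KreinFrames

universe u

variable {H : Type*} [NormedAddCommGroup H] [InnerProductSpace ℂ H]

/-- A subspace `M` is uniformly `J`-positive: `[x,x] ≥ α‖x‖²` on `M` for some `α > 0`. -/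
def UnifJPos (J : H →L[ℂ] H) (M : Submodule ℂ H) : Prop :=
  ∃ α : ℝ, 0 < α ∧ ∀ x ∈ M, α * ‖x‖ ^ 2 ≤ (⟪J x, x⟫).re

/-- A subspace `M` is uniformly `J`-negative: `[x,x] ≤ -α‖x‖²` on `M` for some `α > 0`. -/
def UnifJNeg (J : H →L[ℂ] H) (M : Submodule ℂ H) : Prop :=
  ∃ α : ℝ, 0 < α ∧ ∀ x ∈ M, (⟪J x, x⟫).re ≤ -(α * ‖x‖ ^ 2)

/-- Maximal uniformly `J`-positive subspace. -/
def MaxUnifJPos (J : H →L[ℂ] H) (M : Submodule ℂ H) : Prop :=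
  UnifJPos J M ∧ ∀ M' : Submodule ℂ H, UnifJPos J M' → M ≤ M' → M' = M

/-- Maximal uniformly `J`-negative subspace. -/
def MaxUnifJNeg (J : H →L[ℂ] H) (M : Submodule ℂ H) : Prop :=
  UnifJNeg J M ∧ ∀ M' : Submodule ℂ H, UnifJNeg J M' → M ≤ M' → M' = M

/-- The `J`-orthogonal companion `M^{[⊥]} = {x | [x,m] = 0 ∀ m ∈ M}` of a subspace `M`. -/
def Jorth (J : H →L[ℂ] H) (M : Submodule ℂ H) : Submodule ℂ H where
  carrier := {x | ∀ m ∈ M, ⟪J x, m⟫ = 0}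
  zero_mem' := by intro m _; simp
  add_mem' := by
    intro a b ha hb m hm
    rw [map_add, inner_add_left, ha m hm, hb m hm, add_zero]
  smul_mem' := by
    intro c x hx m hm
    rw [map_smul, inner_smul_left, hx m hm, mul_zero]

/-- `T : ℓ²(I) → H` is the synthesis operator of the family `f`, i.e. `T e_i = f_i`. -/
def IsSynthesis {I : Type*} (f : I → H) (T : lp (fun _ : I => ℂ) 2 →L[ℂ] H) : Prop :=
  ∀ i, T (lp.single 2 i 1) = f i

/-- `f` is a `J`-frame: it is a Bessel family (it admits a bounded synthesis operator `T`),
and the ranges of `T₊ = T P₊` and `T₋ = T P₋` (the synthesis operators of the subfamilies of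
`J`-nonnegative and `J`-negative vectors) are maximal uniformly `J`-positive resp. maximal
uniformly `J`-negative subspaces of `H`. -/
def IsJFrame {I : Type*} (J : H →L[ℂ] H) (f : I → H) : Prop :=
  ∃ T Tp Tm : lp (fun _ : I => ℂ) 2 →L[ℂ] H,
    IsSynthesis f T ∧
    IsSynthesis (fun i => if 0 ≤ (⟪J (f i), f i⟫).re then f i else 0) Tp ∧
    IsSynthesis (fun i => if 0 ≤ (⟪J (f i), f i⟫).re then 0 else f i) Tm ∧
    MaxUnifJPos J (LinearMap.range (Tp : lp (fun _ : I => ℂ) 2 →ₗ[ℂ] H)) ∧ MaxUnifJNeg J (LinearMap.range (Tm : lp (fun _ : I => ℂ) 2 →ₗ[ℂ] H))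

/-- `c₀(M, C)`: supremum of `|⟪m,n⟫|` over unit vectors `m ∈ M` and unit `J`-neutral vectors
`n` (the cone `C = {n | [n,n] = 0}`). -/
def c0 (J : H →L[ℂ] H) (M : Submodule ℂ H) : ℝ :=
  sSup {r : ℝ | ∃ m ∈ M, ∃ n : H, ⟪J n, n⟫ = 0 ∧ ‖m‖ = 1 ∧ ‖n‖ = 1 ∧ r = ‖⟪m, n⟫‖}

/-- Cosine of the Friedrichs angle between two subspaces. -/
def friedrichs (S T : Submodule ℂ H) : ℝ :=
  sSup {r : ℝ | ∃ x ∈ S ⊓ (S ⊓ T)ᗮ, ∃ y ∈ T ⊓ (S ⊓ T)ᗮ, ‖x‖ = 1 ∧ ‖y‖ = 1 ∧ r = ‖⟪x, y⟫‖}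

/-- The reduced minimum modulus `γ(A) = inf {‖Ax‖ : x ∈ N(A)^⊥, ‖x‖ = 1}`. -/
def rmm {E F : Type*} [NormedAddCommGroup E] [InnerProductSpace ℂ E]
    [NormedAddCommGroup F] [InnerProductSpace ℂ F] (A : E →L[ℂ] F) : ℝ :=
  sInf {r : ℝ | ∃ x ∈ (LinearMap.ker (A : E →ₗ[ℂ] F))ᗮ, ‖x‖ = 1 ∧ r = ‖A x‖}

/-- The set `Q` of bounded idempotents with uniformly `J`-positive range and uniformly
`J`-negative kernel. -/
def QSet (J : H →L[ℂ] H) : Set (H →L[ℂ] H) :=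
  {Q | Q ∘L Q = Q ∧ UnifJPos J (LinearMap.range (Q : H →ₗ[ℂ] H)) ∧ UnifJNeg J (LinearMap.ker (Q : H →ₗ[ℂ] H))}

/-- `ℓ²(s)` as a subspace of `ℓ²(I)`, for `s : Set I`. -/
def lpSub {I : Type*} (s : Set I) : Submodule ℂ (lp (fun _ : I => ℂ) 2) where
  carrier := {x | ∀ i ∉ s, x i = 0}
  zero_mem' := by intro i _; simp
  add_mem' := by
    intro a b ha hb i hi
    have h : (↑(a + b) : ∀ _ : I, ℂ) i = a i + b i := by rw [lp.coeFn_add]; rfl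
    rw [h, ha i hi, hb i hi, add_zero]
  smul_mem' := by
    intro c x hx i hi
    have h : (↑(c • x) : ∀ _ : I, ℂ) i = c • (x i : ℂ) := by rw [lp.coeFn_smul]; rfl
    rw [h, hx i hi, smul_zero]

/-- `S` is the `J`-frame operator of some `J`-frame: `S = T T^#` where `T` is the synthesis
operator of a `J`-frame and `T^# = J₂ T* J`. -/
def IsJFrameOperator {H : Type u} [NormedAddCommGroup H] [InnerProductSpace ℂ H]
    [CompleteSpace H] (J S : H →L[ℂ] H) : Prop :=
  ∃ (I : Type u) (f : I → H) (T Tp Tm : lp (fun _ : I => ℂ) 2 →L[ℂ] H)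
    (J2 : lp (fun _ : I => ℂ) 2 →L[ℂ] lp (fun _ : I => ℂ) 2),
    IsSynthesis f T ∧
    IsSynthesis (fun i => if 0 ≤ (⟪J (f i), f i⟫).re then f i else 0) Tp ∧
    IsSynthesis (fun i => if 0 ≤ (⟪J (f i), f i⟫).re then 0 else f i) Tm ∧
    MaxUnifJPos J (LinearMap.range (Tp : lp (fun _ : I => ℂ) 2 →ₗ[ℂ] H)) ∧ MaxUnifJNeg J (LinearMap.range (Tm : lp (fun _ : I => ℂ) 2 →ₗ[ℂ] H)) ∧
    (∀ (x : lp (fun _ : I => ℂ) 2) (i : I),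
      J2 x i = if 0 ≤ (⟪J (f i), f i⟫).re then (x i : ℂ) else -(x i : ℂ)) ∧
    S = T ∘L J2 ∘L adjoint T ∘L J

section Aux

variable {E F : Type*} [NormedAddCommGroup E] [InnerProductSpace ℂ E]
  [NormedAddCommGroup F] [InnerProductSpace ℂ F]

lemma rmm_nonneg (A : E →L[ℂ] F) : 0 ≤ rmm A :=
  Real.sInf_nonneg (fun r hr => by obtain ⟨x, -, -, rfl⟩ := hr; positivity)

lemma lp_norm_sq {I : Type*} (f : lp (fun _ : I => ℂ) 2) : ‖f‖ ^ 2 = ∑' i, ‖f i‖ ^ 2 := by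
  have h := lp.norm_rpow_eq_tsum (p := 2) (by norm_num) f
  rw [show ((2 : ENNReal).toReal) = (2 : ℝ) by norm_num] at h
  rw [show ((2 : ℝ)) = ((2 : ℕ) : ℝ) by norm_num] at h
  simp only [Real.rpow_natCast] at h
  exact h

lemma adjoint_apply_coord {H : Type*} [NormedAddCommGroup H] [InnerProductSpace ℂ H]
    [CompleteSpace H] {I : Type*} {φ : I → H}
    {A : lp (fun _ : I => ℂ) 2 →L[ℂ] H} (hA : IsSynthesis φ A) (h : H) (i : I) :
    (adjoint A h : ∀ _ : I, ℂ) i = ⟪φ i, h⟫ := by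
  classical
  have h1 : ⟪lp.single 2 i (1 : ℂ), adjoint A h⟫ = ⟪(1 : ℂ), (adjoint A h : ∀ _ : I, ℂ) i⟫ :=
    lp.inner_single_left i 1 (adjoint A h)
  rw [adjoint_inner_right, hA i] at h1
  simpa [RCLike.inner_apply] using h1.symm

lemma tsum_norm_inner_sq {H : Type*} [NormedAddCommGroup H] [InnerProductSpace ℂ H]
    [CompleteSpace H] {I : Type*} {φ : I → H}
    {A : lp (fun _ : I => ℂ) 2 →L[ℂ] H} (hA : IsSynthesis φ A) (h : H) :
    ∑' i : I, ‖⟪h, φ i⟫‖ ^ 2 = ‖adjoint A h‖ ^ 2 := by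
  rw [lp_norm_sq]
  exact tsum_congr fun i => by rw [adjoint_apply_coord hA, ← norm_inner_symm]

set_option maxHeartbeats 1000000 in
lemma bounds [CompleteSpace E] [CompleteSpace F]
    (A : E →L[ℂ] F) {g w : F} (hg : g ∈ LinearMap.range (A : E →ₗ[ℂ] F)) (hw : ‖w‖ = ‖g‖)
    {α : ℝ} (hα0 : 0 < α) (hα : α * ‖g‖ ^ 2 ≤ (⟪w, g⟫).re) :
    rmm A ^ 2 * α ^ 2 * (⟪w, g⟫).re ≤ ‖adjoint A w‖ ^ 2 ∧
      ‖adjoint A w‖ ^ 2 ≤ ‖A‖ ^ 2 / α * (⟪w, g⟫).re := by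
  have hAw : ‖adjoint A w‖ ≤ ‖A‖ * ‖g‖ := by
    calc ‖adjoint A w‖ ≤ ‖adjoint A‖ * ‖w‖ := le_opNorm _ _
      _ = ‖A‖ * ‖g‖ := by rw [adjoint.norm_map, hw]
  constructor
  · -- lower bound
    by_cases hg0 : g = 0
    · have hz : (⟪w, g⟫).re = 0 := by simp [hg0]
      rw [hz]
      have : (0:ℝ) ≤ ‖adjoint A w‖ ^ 2 := by positivity
      linarith
    obtain ⟨y, hy⟩ := hg
    haveI : CompleteSpace (LinearMap.ker (A : E →ₗ[ℂ] F)) :=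
      (ContinuousLinearMap.isClosed_ker A).completeSpace_coe
    obtain ⟨k, hk, x₀, hx₀, hyk⟩ := (LinearMap.ker (A : E →ₗ[ℂ] F)).exists_add_mem_mem_orthogonal y
    have hAx : A x₀ = g := by
      have hk0 : A k = 0 := hk
      have : A y = g := hy
      rw [hyk, map_add, hk0, zero_add] at this
      exact this
    have hx0 : x₀ ≠ 0 := fun h => hg0 (by rw [← hAx, h, map_zero])
    have hxpos : (0:ℝ) < ‖x₀‖ := norm_pos_iff.mpr hx0
    have hgpos : (0:ℝ) < ‖g‖ := norm_pos_iff.mpr hg0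
    set s : ℝ := (⟪w, g⟫).re with hs
    have hrg : rmm A * ‖x₀‖ ≤ ‖g‖ := by
      set c : ℂ := ((‖x₀‖ : ℝ) : ℂ)⁻¹ with hc
      have hmem : ‖A (c • x₀)‖ ∈
          {r : ℝ | ∃ x ∈ (LinearMap.ker (A : E →ₗ[ℂ] F))ᗮ, ‖x‖ = 1 ∧ r = ‖A x‖} := by
        refine ⟨c • x₀, Submodule.smul_mem _ _ hx₀, ?_, rfl⟩
        rw [norm_smul, hc]
        simp [norm_inv, Complex.norm_real, abs_of_pos hxpos]
        field_simp
      have hle : rmm A ≤ ‖A (c • x₀)‖ :=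
        csInf_le ⟨0, fun r hr => by obtain ⟨x, -, -, rfl⟩ := hr; positivity⟩ hmem
      have hval : ‖A (c • x₀)‖ = ‖x₀‖⁻¹ * ‖g‖ := by
        rw [map_smul, norm_smul, hAx, hc]
        simp [norm_inv, Complex.norm_real, abs_of_pos hxpos]
      rw [hval] at hle
      rw [← le_div_iff₀ hxpos]
      rw [div_eq_inv_mul]
      linarith
    have hs1 : s ≤ ‖adjoint A w‖ * ‖x₀‖ := by
      have h1 : ⟪adjoint A w, x₀⟫ = ⟪w, g⟫ := by rw [adjoint_inner_left, hAx]
      have h2 := re_inner_le_norm (𝕜 := ℂ) (adjoint A w) x₀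
      rw [h1] at h2
      exact h2
    have hs2 : s ≤ ‖g‖ ^ 2 := by
      have h2 := re_inner_le_norm (𝕜 := ℂ) w g
      rw [hw] at h2
      calc s ≤ ‖g‖ * ‖g‖ := h2
        _ = ‖g‖ ^ 2 := by ring
    have hs0 : 0 ≤ s := le_trans (by positivity) hα
    have hγ : 0 ≤ rmm A := rmm_nonneg A
    have key : rmm A * s ≤ ‖adjoint A w‖ * ‖g‖ := by
      nlinarith [mul_le_mul_of_nonneg_left hs1 hγ,
        mul_le_mul_of_nonneg_left hrg (norm_nonneg (adjoint A w))]
    have ha2 : (α * ‖g‖ ^ 2) ^ 2 ≤ s ^ 2 := pow_le_pow_left₀ (by positivity) hα 2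
    have e1 : α ^ 2 * s * ‖g‖ ^ 2 ≤ s ^ 2 := by
      nlinarith [mul_le_mul_of_nonneg_left hs2
        (mul_nonneg (sq_nonneg α) (sq_nonneg ‖g‖))]
    have F1 : rmm A ^ 2 * s ^ 2 ≤ ‖adjoint A w‖ ^ 2 * ‖g‖ ^ 2 := by
      nlinarith [pow_le_pow_left₀ (mul_nonneg hγ hs0) key 2]
    have final2 : rmm A ^ 2 * α ^ 2 * s * ‖g‖ ^ 2 ≤ ‖adjoint A w‖ ^ 2 * ‖g‖ ^ 2 := by
      nlinarith [mul_le_mul_of_nonneg_left e1 (sq_nonneg (rmm A))]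
    exact le_of_mul_le_mul_right final2 (by positivity)
  · -- upper bound
    rw [div_mul_eq_mul_div, le_div_iff₀ hα0]
    nlinarith [mul_self_le_mul_self (norm_nonneg (adjoint A w)) hAw,
      mul_le_mul_of_nonneg_left hα (sq_nonneg ‖A‖)]

end Aux


/-- explicit frame bounds for the subfamilies of a `J`-frame in terms of the
reduced minimum modulus, the norms of `T±` and the definiteness bounds `α±`. -/
theorem statement2 {H I : Type*} [NormedAddCommGroup H] [InnerProductSpace ℂ H] [CompleteSpace H]
    (J : H →L[ℂ] H) (hJsa : IsSelfAdjoint J) (hJsq : J ∘L J = 1)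
    (f : I → H) (T Tp Tm : lp (fun _ : I => ℂ) 2 →L[ℂ] H)
    (hT : IsSynthesis f T)
    (hTp : IsSynthesis (fun i => if 0 ≤ (⟪J (f i), f i⟫).re then f i else 0) Tp)
    (hTm : IsSynthesis (fun i => if 0 ≤ (⟪J (f i), f i⟫).re then 0 else f i) Tm)
    (hmaxp : MaxUnifJPos J (LinearMap.range (Tp : lp (fun _ : I => ℂ) 2 →ₗ[ℂ] H)))
    (hmaxm : MaxUnifJNeg J (LinearMap.range (Tm : lp (fun _ : I => ℂ) 2 →ₗ[ℂ] H)))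
    (αp : ℝ) (hαp0 : 0 < αp)
    (hαp : ∀ g ∈ LinearMap.range (Tp : lp (fun _ : I => ℂ) 2 →ₗ[ℂ] H), αp * ‖g‖ ^ 2 ≤ (⟪J g, g⟫).re)
    (hαpmax : ∀ β : ℝ, (∀ g ∈ LinearMap.range (Tp : lp (fun _ : I => ℂ) 2 →ₗ[ℂ] H), β * ‖g‖ ^ 2 ≤ (⟪J g, g⟫).re) → β ≤ αp)
    (αm : ℝ) (hαm0 : 0 < αm)
    (hαm : ∀ g ∈ LinearMap.range (Tm : lp (fun _ : I => ℂ) 2 →ₗ[ℂ] H), (⟪J g, g⟫).re ≤ -(αm * ‖g‖ ^ 2))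
    (hαmmax : ∀ β : ℝ, (∀ g ∈ LinearMap.range (Tm : lp (fun _ : I => ℂ) 2 →ₗ[ℂ] H), (⟪J g, g⟫).re ≤ -(β * ‖g‖ ^ 2)) → β ≤ αm) :
    (∀ g ∈ LinearMap.range (Tp : lp (fun _ : I => ℂ) 2 →ₗ[ℂ] H),
      rmm Tp ^ 2 * αp ^ 2 * (⟪J g, g⟫).re ≤ ∑' i : {j : I // 0 ≤ (⟪J (f j), f j⟫).re}, ‖⟪J g, f i⟫‖ ^ 2 ∧
        ∑' i : {j : I // 0 ≤ (⟪J (f j), f j⟫).re}, ‖⟪J g, f i⟫‖ ^ 2 ≤ ‖Tp‖ ^ 2 / αp * (⟪J g, g⟫).re) ∧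
    (∀ g ∈ LinearMap.range (Tm : lp (fun _ : I => ℂ) 2 →ₗ[ℂ] H),
      rmm Tm ^ 2 * αm ^ 2 * (-(⟪J g, g⟫).re) ≤ ∑' i : {j : I // ¬ 0 ≤ (⟪J (f j), f j⟫).re}, ‖⟪J g, f i⟫‖ ^ 2 ∧
        ∑' i : {j : I // ¬ 0 ≤ (⟪J (f j), f j⟫).re}, ‖⟪J g, f i⟫‖ ^ 2 ≤ ‖Tm‖ ^ 2 / αm * (-(⟪J g, g⟫).re)) := by
  classical
  have hJJ : ∀ x : H, J (J x) = x := fun x => by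
    have h := congrArg (fun T : H →L[ℂ] H => T x) hJsq
    simpa using h
  have hsym : ∀ a b : H, (⟪J a, b⟫ : ℂ) = ⟪a, J b⟫ := fun a b => by
    conv_lhs => rw [← hJsa.adjoint_eq]
    exact adjoint_inner_left J b a
  have hJnorm : ∀ x : H, ‖J x‖ = ‖x‖ := by
    intro x
    have h1 : (⟪J x, J x⟫ : ℂ) = ⟪x, x⟫ := by rw [hsym, hJJ]
    rw [@norm_eq_sqrt_re_inner ℂ, h1, ← @norm_eq_sqrt_re_inner ℂ]
  constructor
  · intro g hg
    have hb := bounds Tp hg (hJnorm g) hαp0 (hαp g hg)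
    have ht : (∑' i : {j : I // 0 ≤ (⟪J (f j), f j⟫).re}, ‖⟪J g, f i⟫‖ ^ 2)
        = ‖adjoint Tp (J g)‖ ^ 2 := by
      rw [← tsum_norm_inner_sq hTp (J g)]
      have hsupp : Function.support
          (fun i : I => ‖⟪J g, if 0 ≤ (⟪J (f i), f i⟫).re then f i else 0⟫‖ ^ 2)
          ⊆ {j : I | 0 ≤ (⟪J (f j), f j⟫).re} := by
        intro i hi
        by_contra h
        have h' : ¬ 0 ≤ (⟪J (f i), f i⟫).re := h
        exact hi (by simp [if_neg h'])
      calc (∑' i : {j : I // 0 ≤ (⟪J (f j), f j⟫).re}, ‖⟪J g, f i⟫‖ ^ 2)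
          = ∑' i : {j : I | 0 ≤ (⟪J (f j), f j⟫).re},
              ‖⟪J g, if 0 ≤ (⟪J (f i.1), f i.1⟫).re then f i.1 else 0⟫‖ ^ 2 :=
            tsum_congr fun i => by rw [if_pos i.2]
        _ = ∑' i : I, ‖⟪J g, if 0 ≤ (⟪J (f i), f i⟫).re then f i else 0⟫‖ ^ 2 :=
            tsum_subtype_eq_of_support_subset hsupp
    rw [ht]
    exact hb
  · intro g hg
    have hw : ‖-(J g)‖ = ‖g‖ := by rw [norm_neg]; exact hJnorm g
    have hre : (⟪-(J g), g⟫ : ℂ).re = -(⟪J g, g⟫ : ℂ).re := by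
      rw [inner_neg_left]; simp
    have hα' : αm * ‖g‖ ^ 2 ≤ (⟪-(J g), g⟫ : ℂ).re := by
      rw [hre]; linarith [hαm g hg]
    have hb := bounds Tm hg hw hαm0 hα'
    have ht : (∑' i : {j : I // ¬ 0 ≤ (⟪J (f j), f j⟫).re}, ‖⟪J g, f i⟫‖ ^ 2)
        = ‖adjoint Tm (-(J g))‖ ^ 2 := by
      rw [← tsum_norm_inner_sq hTm (-(J g))]
      have hsupp : Function.support
          (fun i : I => ‖⟪-(J g), if 0 ≤ (⟪J (f i), f i⟫).re then 0 else f i⟫‖ ^ 2)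
          ⊆ {j : I | ¬ 0 ≤ (⟪J (f j), f j⟫).re} := by
        intro i hi
        by_contra h
        have h' : 0 ≤ (⟪J (f i), f i⟫).re := not_not.mp h
        exact hi (by simp [if_pos h'])
      calc (∑' i : {j : I // ¬ 0 ≤ (⟪J (f j), f j⟫).re}, ‖⟪J g, f i⟫‖ ^ 2)
          = ∑' i : {j : I | ¬ 0 ≤ (⟪J (f j), f j⟫).re},
              ‖⟪-(J g), if 0 ≤ (⟪J (f i.1), f i.1⟫).re then 0 else f i.1⟫‖ ^ 2 :=
            tsum_congr fun i => by rw [if_neg i.2, inner_neg_left, norm_neg]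
        _ = ∑' i : I, ‖⟪-(J g), if 0 ≤ (⟪J (f i), f i⟫).re then 0 else f i⟫‖ ^ 2 :=
            tsum_subtype_eq_of_support_subset hsupp
    rw [ht, ← hre]
    exact hb

end KreinFrames
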